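/- For each positive integer n, det(xI_n − A_n) = Σ_{k=0}^{n} (−1)^{⌊3k/2⌋} · C(⌊(n+k)/2⌋, k) · x^{n−k}, where A_n is the n×n unit-primitive matrix with entries a_{ij} = [i+j ≤ n+1]. -/

import Mathlib

open Matrix

/-- The `n × n` unit-primitive matrix: entry `(i,j)` (1-based) is 1 iff `i + j ≤ n + 1`. -/
def A (n : ℕ) : Matrix (Fin n) (Fin n) ℝ :=
  Matrix.of fun i j => if (i : ℕ) + (j : ℕ) + 1 ≤ n then 1 else 0

/-- Auxiliary family of matrices: `x·I - [i+j ≤ t]` of size `m`. -/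
def Mm (x : ℝ) (m t : ℕ) : Matrix (Fin m) (Fin m) ℝ :=
  Matrix.of fun i j => (if (i : ℕ) = (j : ℕ) then x else 0) -
    (if (i : ℕ) + (j : ℕ) ≤ t then 1 else 0)

/-- Companion family: `x·L - [i+j ≤ t]` where `L` is the subdiagonal shift. -/
def Nm (x : ℝ) (m t : ℕ) : Matrix (Fin m) (Fin m) ℝ :=
  Matrix.of fun i j => (if (i : ℕ) = (j : ℕ) + 1 then x else 0) -
    (if (i : ℕ) + (j : ℕ) ≤ t then 1 else 0)

/-- The claimed characteristic polynomial value. -/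
noncomputable def Ss (x : ℝ) (n : ℕ) : ℝ :=
  ∑ k ∈ Finset.range (n + 1),
    (-1 : ℝ) ^ (3 * k / 2) * (Nat.choose ((n + k) / 2) k : ℝ) * x ^ (n - k)

lemma L1 (x : ℝ) (m : ℕ) : (Mm x (m+2) m).det = x * (Mm x (m+1) m).det := by
  rw [det_succ_row _ (Fin.last (m+1))]
  rw [Finset.sum_eq_single_of_mem (Fin.last (m+1)) (Finset.mem_univ _)]
  · have h1 : (Mm x (m+2) m) (Fin.last (m+1)) (Fin.last (m+1)) = x := by
      simp [Mm, Fin.last]; omega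
    have h2 : (Mm x (m+2) m).submatrix (Fin.last (m+1)).succAbove (Fin.last (m+1)).succAbove
        = Mm x (m+1) m := by
      ext i j
      simp [Mm, Fin.succAbove_last, Matrix.submatrix_apply]
    rw [h1, h2]
    have : ((Fin.last (m+1) : Fin (m+2)) : ℕ) = m+1 := rfl
    rw [this]
    rw [show (-1 : ℝ) ^ (m+1+(m+1)) = 1 by
      rw [show m+1+(m+1) = 2*(m+1) by ring, pow_mul]; norm_num]
    ring
  · intro j _ hj
    have hj' : (j : ℕ) ≠ m + 1 := by
      intro h; apply hj; ext; simpa using h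
    have : (Mm x (m+2) m) (Fin.last (m+1)) j = 0 := by
      simp only [Mm, Matrix.of_apply]
      rw [if_neg, if_neg]
      · ring
      · simp [Fin.last]; omega
      · simp [Fin.last]; omega
    rw [this]; ring

lemma L4 (x : ℝ) (m : ℕ) : (Nm x (m+2) (m+1)).det = (-1)^m * (Mm x (m+1) m).det := by
  rw [det_succ_column _ (Fin.last (m+1))]
  rw [Finset.sum_eq_single_of_mem (0 : Fin (m+2)) (Finset.mem_univ _)]
  · have h1 : (Nm x (m+2) (m+1)) 0 (Fin.last (m+1)) = -1 := by
      simp [Nm, Fin.last]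
    have h2 : (Nm x (m+2) (m+1)).submatrix (0 : Fin (m+2)).succAbove
        (Fin.last (m+1)).succAbove = Mm x (m+1) m := by
      ext i j
      simp only [Nm, Mm, Matrix.submatrix_apply, Fin.succAbove_last, Fin.succAbove_zero,
        Matrix.of_apply, Fin.val_succ, Fin.coe_castSucc]
      have c1 : ((i:ℕ)+1 = (j:ℕ)+1) ↔ ((i:ℕ) = (j:ℕ)) := by omega
      have c2 : ((i:ℕ)+1+(j:ℕ) ≤ m+1) ↔ ((i:ℕ)+(j:ℕ) ≤ m) := by omega
      rw [if_congr c1 rfl rfl, if_congr c2 rfl rfl]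
    rw [h1, h2]
    have hv : ((0 : Fin (m+2)) : ℕ) + ((Fin.last (m+1) : Fin (m+2)) : ℕ) = m+1 := by
      simp [Fin.last]
    rw [hv, pow_succ]
    ring
  · intro i _ hi
    have hi' : (i : ℕ) ≠ 0 := by
      intro h; apply hi; ext; simpa using h
    have : (Nm x (m+2) (m+1)) i (Fin.last (m+1)) = 0 := by
      simp only [Nm, Matrix.of_apply]
      rw [if_neg, if_neg]
      · ring
      · simp [Fin.last]; omega
      · simp [Fin.last]; omega
    rw [this]; ring

lemma L3 (x : ℝ) (m : ℕ) :
    (Mm x (m+3) (m+2)).det = x * (Mm x (m+2) (m+2)).det - (Mm x (m+1) m).det := by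
  rw [det_succ_row _ (Fin.last (m+2))]
  rw [Fin.sum_univ_succ]
  have e0 : (Mm x (m+3) (m+2)) (Fin.last (m+2)) 0 = -1 := by
    simp [Mm, Fin.last]
  have s0 : (Mm x (m+3) (m+2)).submatrix (Fin.last (m+2)).succAbove
      ((0 : Fin (m+3)).succAbove) = Nm x (m+2) (m+1) := by
    ext i j
    simp only [Mm, Nm, Matrix.submatrix_apply, Fin.succAbove_last, Fin.succAbove_zero,
      Matrix.of_apply, Fin.val_succ, Fin.coe_castSucc]
    have c1 : ((i:ℕ) = (j:ℕ)+1) ↔ ((i:ℕ) = (j:ℕ)+1) := Iff.rfl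
    have c2 : ((i:ℕ)+((j:ℕ)+1) ≤ m+2) ↔ ((i:ℕ)+(j:ℕ) ≤ m+1) := by omega
    rw [if_congr c1 rfl rfl, if_congr c2 rfl rfl]
  rw [e0, s0, L4]
  rw [Finset.sum_eq_single_of_mem (Fin.last (m+1)) (Finset.mem_univ _)]
  · have h1 : (Mm x (m+3) (m+2)) (Fin.last (m+2)) (Fin.last (m+1)).succ = x := by
      have hv : (((Fin.last (m+1)).succ : Fin (m+3)) : ℕ) = m+2 := rfl
      simp [Mm, Fin.last, hv]
    have hsucclast : (Fin.last (m+1)).succ = Fin.last (m+2) := rfl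
    have h2 : (Mm x (m+3) (m+2)).submatrix (Fin.last (m+2)).succAbove
        ((Fin.last (m+1)).succ).succAbove = Mm x (m+2) (m+2) := by
      rw [hsucclast]
      ext i j
      simp [Mm, Fin.succAbove_last, Matrix.submatrix_apply]
    rw [h1, h2]
    have hv1 : ((Fin.last (m+2) : Fin (m+3)) : ℕ) = m+2 := rfl
    have hv2 : (((Fin.last (m+1)).succ : Fin (m+3)) : ℕ) = m+2 := rfl
    have hv3 : ((0 : Fin (m+3)) : ℕ) = 0 := rfl
    rw [hv1, hv2, hv3]
    have p1 : (-1:ℝ) ^ (m+2+(m+2)) = 1 := by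
      rw [show m+2+(m+2) = 2*(m+2) by ring, pow_mul]; norm_num
    have p2 : (-1:ℝ) ^ (m+2+0) * -1 * ((-1)^m * (Mm x (m+1) m).det)
        = -(Mm x (m+1) m).det := by
      rw [show m+2+0 = m+2 by ring]
      have : (-1:ℝ)^(m+2) * -1 * (-1)^m = -((-1:ℝ)^(m+m) * ((-1)^2)) := by
        rw [pow_add]; ring
      calc (-1:ℝ) ^ (m+2) * -1 * ((-1)^m * (Mm x (m+1) m).det)
          = ((-1:ℝ)^(m+2) * -1 * (-1)^m) * (Mm x (m+1) m).det := by ring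
        _ = -((-1:ℝ)^(m+m) * ((-1)^2)) * (Mm x (m+1) m).det := by rw [this]
        _ = -(Mm x (m+1) m).det := by
            rw [show m+m = 2*m by ring, pow_mul]; norm_num
    rw [p1, p2]
    ring
  · intro j _ hj
    have hj' : (j : ℕ) ≠ m + 1 := by
      intro h; apply hj; ext; simpa using h
    have : (Mm x (m+3) (m+2)) (Fin.last (m+2)) j.succ = 0 := by
      simp only [Mm, Matrix.of_apply]
      rw [if_neg, if_neg]
      · ring
      · simp [Fin.last, Fin.val_succ] <;> omega
      · simp [Fin.last, Fin.val_succ] <;> omega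
    rw [this]; ring

lemma L2 (x : ℝ) (m : ℕ) :
    (Mm x (m+4) (m+4)).det
      = 2*x*(Mm x (m+3) (m+2)).det - x^2*(Mm x (m+2) m).det := by
  have h01 : (0 : Fin (m+4)) ≠ 1 := by
    intro h
    have := congrArg (Fin.val) h
    simp at this
  set M₀ := Mm x (m+4) (m+4) with hM0
  set M₁ := updateRow M₀ 0 (M₀ 0 + (-1 : ℝ) • M₀ 1) with hM1
  set M₂ := updateCol M₁ 0 (fun k => M₁ k 0 + (-1 : ℝ) • M₁ k 1) with hM2
  have h1 : M₁.det = M₀.det := det_updateRow_add_smul_self M₀ h01 (-1)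
  have h2 : M₂.det = M₁.det := det_updateCol_add_smul_self M₁ h01 (-1)
  rw [← h1, ← h2]
  rw [det_succ_column_zero, Fin.sum_univ_succ, Fin.sum_univ_succ]
  have v0 : M₂ 0 0 = 2*x := by
    rw [hM2, updateCol_self, hM1, updateRow_self]
    have hv1 : ((1 : Fin (m+4)) : ℕ) = 1 := rfl
    simp [hM0, Mm, hv1]
    ring
  have v1 : M₂ 1 0 = -x := by
    rw [hM2, updateCol_self, hM1, updateRow_ne h01.symm]
    have hv1 : ((1 : Fin (m+4)) : ℕ) = 1 := rfl
    simp [hM0, Mm, hv1]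
    ring
  have vS : ∀ i : Fin (m+2), M₂ i.succ.succ 0 = 0 := by
    intro i
    have hne : (i.succ.succ : Fin (m+4)) ≠ 0 := by
      intro h; have := congrArg Fin.val h; simp at this
    have hne1 : (i.succ.succ : Fin (m+4)) ≠ 1 := by
      intro h; have := congrArg Fin.val h; simp [Fin.val_succ] at this
    rw [hM2, updateCol_self, hM1, updateRow_ne hne]
    have hv1 : ((1 : Fin (m+4)) : ℕ) = 1 := rfl
    have hv0 : ((0 : Fin (m+4)) : ℕ) = 0 := rfl
    simp only [hM0, Mm, Matrix.of_apply, smul_eq_mul, Fin.val_succ, hv1, hv0]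
    have c1 : ¬((i:ℕ)+1+1 = 0) := by omega
    have c2 : ((i:ℕ)+1+1 + 0 ≤ m+4) := by omega
    have c3 : ¬((i:ℕ)+1+1 = 1) := by omega
    have c4 : ((i:ℕ)+1+1 + 1 ≤ m+4) := by omega
    rw [if_neg c1, if_pos c2, if_neg c3, if_pos c4]
    ring
  have sub0 : M₂.submatrix (Fin.succAbove 0) Fin.succ = Mm x (m+3) (m+2) := by
    ext i j
    have hne : (Fin.succ i : Fin (m+4)) ≠ 0 := by
      intro h; have := congrArg Fin.val h; simp at this
    have hnej : (Fin.succ j : Fin (m+4)) ≠ 0 := by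
      intro h; have := congrArg Fin.val h; simp at this
    rw [Matrix.submatrix_apply, Fin.succAbove_zero, hM2, updateCol_ne hnej, hM1,
      updateRow_ne hne]
    simp only [hM0, Mm, Matrix.of_apply, Fin.val_succ]
    have c1 : ((i:ℕ)+1 = (j:ℕ)+1) ↔ ((i:ℕ) = (j:ℕ)) := by omega
    have c2 : ((i:ℕ)+1+((j:ℕ)+1) ≤ m+4) ↔ ((i:ℕ)+(j:ℕ) ≤ m+2) := by omega
    rw [if_congr c1 rfl rfl, if_congr c2 rfl rfl]
  set W := M₂.submatrix (Fin.succAbove ((0:Fin (m+3)).succ)) Fin.succ with hW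
  have hsa0 : ((0:Fin (m+3)).succ).succAbove (0 : Fin (m+3)) = 0 := by
    apply Fin.succAbove_of_castSucc_lt
    simp [Fin.lt_def]
  have hsaS : ∀ i : Fin (m+2), ((0:Fin (m+3)).succ).succAbove i.succ = i.succ.succ := by
    intro i
    apply Fin.succAbove_of_le_castSucc
    simp [Fin.le_def]
  have w0 : ∀ j : Fin (m+2), W 0 (Fin.succ j) = 0 := by
    intro j
    rw [hW, Matrix.submatrix_apply, hsa0]
    have hnej : (Fin.succ (Fin.succ j) : Fin (m+4)) ≠ 0 := by
      intro h; have := congrArg Fin.val h; simp at this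
    rw [hM2, updateCol_ne hnej, hM1, updateRow_self]
    have hv1 : ((1 : Fin (m+4)) : ℕ) = 1 := rfl
    have hv0 : ((0 : Fin (m+4)) : ℕ) = 0 := rfl
    simp only [hM0, Mm, Matrix.of_apply, smul_eq_mul, Fin.val_succ, hv1, hv0, Pi.add_apply,
      Pi.smul_apply]
    have c1 : ¬((0:ℕ) = (j:ℕ)+1+1) := by omega
    have c2 : (0 + ((j:ℕ)+1+1) ≤ m+4) := by omega
    have c3 : ¬((1:ℕ) = (j:ℕ)+1+1) := by omega
    have c4 : (1 + ((j:ℕ)+1+1) ≤ m+4) := by omega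
    rw [if_neg c1, if_pos c2, if_neg c3, if_pos c4]
    ring
  have w00 : W 0 0 = -x := by
    rw [hW, Matrix.submatrix_apply, hsa0]
    have hnej : (Fin.succ (0:Fin (m+3)) : Fin (m+4)) ≠ 0 := by
      intro h; have := congrArg Fin.val h; simp at this
    rw [hM2, updateCol_ne hnej, hM1, updateRow_self]
    have hv1 : ((1 : Fin (m+4)) : ℕ) = 1 := rfl
    have hv0 : ((0 : Fin (m+4)) : ℕ) = 0 := rfl
    simp [hM0, Mm, hv1, hv0]
    ring
  have wsub : W.submatrix Fin.succ (Fin.succAbove 0) = Mm x (m+2) m := by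
    ext i j
    rw [Matrix.submatrix_apply, Fin.succAbove_zero, hW, Matrix.submatrix_apply, hsaS]
    have hne : (Fin.succ (Fin.succ i) : Fin (m+4)) ≠ 0 := by
      intro h; have := congrArg Fin.val h; simp at this
    have hnej : (Fin.succ (Fin.succ j) : Fin (m+4)) ≠ 0 := by
      intro h; have := congrArg Fin.val h; simp at this
    rw [hM2, updateCol_ne hnej, hM1, updateRow_ne hne]
    simp only [hM0, Mm, Matrix.of_apply, Fin.val_succ]
    have c1 : ((i:ℕ)+1+1 = (j:ℕ)+1+1) ↔ ((i:ℕ) = (j:ℕ)) := by omega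
    have c2 : ((i:ℕ)+1+1+((j:ℕ)+1+1) ≤ m+4) ↔ ((i:ℕ)+(j:ℕ) ≤ m) := by omega
    rw [if_congr c1 rfl rfl, if_congr c2 rfl rfl]
  have hdetW : W.det = -x * (Mm x (m+2) m).det := by
    rw [det_succ_row_zero]
    rw [Finset.sum_eq_single_of_mem (0 : Fin (m+3)) (Finset.mem_univ _)]
    · rw [w00, wsub]
      simp
    · intro j _ hj
      obtain ⟨j', rfl⟩ : ∃ j' : Fin (m+2), j = Fin.succ j' := by
        rcases Fin.eq_zero_or_eq_succ j with h | h
        · exact absurd h hj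
        · exact h
      rw [w0]; ring
  rw [Finset.sum_eq_zero (fun i _ => by rw [vS i]; ring)]
  rw [v0]
  have hone : (Fin.succ (0:Fin (m+3))) = (1 : Fin (m+4)) := by
    ext; simp [Fin.val_succ]
  rw [hone, v1]
  rw [hdetW, sub0]
  have hv0 : ((0 : Fin (m+4)) : ℕ) = 0 := rfl
  have hv1 : (((1 : Fin (m+4))) : ℕ) = 1 := rfl
  rw [hv0, hv1]
  ring

lemma Srec (x : ℝ) (m : ℕ) :
    Ss x (m+4) = (2*x^2 - 1) * Ss x (m+2) - x^4 * Ss x m := by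
  have hA : (2*x^2) * Ss x (m+2)
      = ∑ k ∈ Finset.range (m+5),
          2 * ((-1:ℝ)^(3*k/2) * (Nat.choose ((m+2+k)/2) k : ℝ)) * x^(m+4-k) := by
    rw [Ss, Finset.mul_sum]
    rw [← Finset.sum_subset (Finset.range_subset_range.2 (by omega : m+2+1 ≤ m+5))]
    · apply Finset.sum_congr rfl
      intro k hk
      have hk' : k ≤ m+2 := by simpa [Nat.lt_succ_iff] using hk
      rw [show m+4-k = (m+2-k)+2 by omega, pow_add]
      ring
    · intro k _ hk
      have : (m+2+k)/2 < k := by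
        simp [Finset.mem_range, Nat.lt_succ_iff] at hk; omega
      rw [Nat.choose_eq_zero_of_lt this]
      simp
  have hC : x^4 * Ss x m
      = ∑ k ∈ Finset.range (m+5),
          ((-1:ℝ)^(3*k/2) * (Nat.choose ((m+k)/2) k : ℝ)) * x^(m+4-k) := by
    rw [Ss, Finset.mul_sum]
    rw [← Finset.sum_subset (Finset.range_subset_range.2 (by omega : m+1 ≤ m+5))]
    · apply Finset.sum_congr rfl
      intro k hk
      have hk' : k ≤ m := by simpa [Nat.lt_succ_iff] using hk
      rw [show m+4-k = (m-k)+4 by omega, pow_add]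
      ring
    · intro k _ hk
      have : (m+k)/2 < k := by
        simp [Finset.mem_range, Nat.lt_succ_iff] at hk; omega
      rw [Nat.choose_eq_zero_of_lt this]
      simp
  have hB : Ss x (m+2)
      = ∑ k ∈ Finset.range (m+5),
          (if 2 ≤ k then
            (-1:ℝ)^(3*(k-2)/2) * (Nat.choose ((m+2+(k-2))/2) (k-2) : ℝ) * x^(m+4-k)
          else 0) := by
    rw [Finset.sum_range_succ', Finset.sum_range_succ']
    rw [if_neg (by omega), if_neg (by omega), add_zero, add_zero]
    rw [Ss, show m+2+1 = m+3 from rfl]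
    apply Finset.sum_congr rfl
    intro k _
    rw [if_pos (by omega)]
    rw [show k+1+1-2 = k by omega, show m+4-(k+1+1) = m+2-k by omega]
  have expand : Ss x (m+4)
      = ∑ k ∈ Finset.range (m+5),
          (2 * ((-1:ℝ)^(3*k/2) * (Nat.choose ((m+2+k)/2) k : ℝ)) * x^(m+4-k)
           - (if 2 ≤ k then
              (-1:ℝ)^(3*(k-2)/2) * (Nat.choose ((m+2+(k-2))/2) (k-2) : ℝ) * x^(m+4-k)
             else 0)
           - ((-1:ℝ)^(3*k/2) * (Nat.choose ((m+k)/2) k : ℝ)) * x^(m+4-k)) := by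
    rw [Ss, show m+4+1 = m+5 from rfl]
    apply Finset.sum_congr rfl
    intro k _
    match k with
    | 0 =>
      rw [if_neg (by omega)]
      norm_num
      ring
    | 1 =>
      rw [if_neg (by omega)]
      have hd : (m+5)/2 + (m+1)/2 = 2*((m+3)/2) := by omega
      have hc : ((((m+5)/2:ℕ)):ℝ) = 2*(((m+3)/2:ℕ):ℝ) - (((m+1)/2:ℕ):ℝ) := by
        have := congrArg (Nat.cast (R := ℝ)) hd
        push_cast at this
        linarith
      rw [show m+4+1 = m+5 from rfl, show m+2+1 = m+3 from rfl]
      simp only [Nat.choose_one_right, show 3*1/2 = 1 from rfl, pow_one]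
      rw [hc]
      ring
    | (j+2) =>
      rw [if_pos (by omega)]
      set q := (m+j)/2 with hq
      have d1 : (m+4+(j+2))/2 = q+3 := by omega
      have d2 : (m+2+(j+2))/2 = q+2 := by omega
      have d3 : (m+2+j)/2 = q+1 := by omega
      have d4 : (m+(j+2))/2 = q+1 := by omega
      have d5 : 3*(j+2)/2 = 3*j/2 + 3 := by omega
      have d6 : j+2-2 = j := by omega
      rw [d1, d2, d6, d3, d4, d5, pow_add]
      have hnat : (q+3).choose (j+2) + (q+1).choose (j+2)
          = 2*((q+2).choose (j+2)) + (q+1).choose j := by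
        have e1 : (q+3).choose (j+2) = (q+2).choose (j+1) + (q+2).choose (j+2) := by
          rw [Nat.choose_succ_succ]
        have e2 : (q+2).choose (j+1) = (q+1).choose j + (q+1).choose (j+1) := by
          rw [Nat.choose_succ_succ]
        have e3 : (q+2).choose (j+2) = (q+1).choose (j+1) + (q+1).choose (j+2) := by
          rw [Nat.choose_succ_succ]
        omega
      have hcast : ((q+3).choose (j+2) : ℝ) + ((q+1).choose (j+2) : ℝ)
          = 2*(((q+2).choose (j+2) : ℕ):ℝ) + (((q+1).choose j : ℕ):ℝ) := by
        exact_mod_cast hnat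
      linear_combination (-((-1:ℝ)^(3*j/2) * x^(m+4-(j+2)))) * hcast
  rw [expand, Finset.sum_sub_distrib, Finset.sum_sub_distrib, ← hA, ← hB, ← hC]
  ring

lemma base0 (x : ℝ) : (Mm x 1 0).det = Ss x 1 := by
  rw [Matrix.det_fin_one]
  simp [Mm, Ss, Finset.sum_range_succ]
  norm_num [Nat.choose]
  ring

lemma base1 (x : ℝ) : (Mm x 2 1).det = Ss x 2 := by
  rw [Matrix.det_fin_two]
  simp [Mm, Ss, Finset.sum_range_succ]
  norm_num [Nat.choose]
  ring

lemma base2 (x : ℝ) : (Mm x 3 2).det = Ss x 3 := by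
  rw [Matrix.det_fin_three]
  simp [Mm, Ss, Finset.sum_range_succ]
  norm_num [Nat.choose]
  ring

lemma base3 (x : ℝ) : (Mm x 4 3).det = Ss x 4 := by
  rw [show (Mm x 4 3).det = _ from Matrix.det_succ_row_zero _]
  simp [Mm, Ss, Fin.sum_univ_succ, Matrix.det_fin_three, Finset.sum_range_succ, Fin.succAbove,
    Fin.val_succ]
  norm_num [Nat.choose]
  ring

lemma key (x : ℝ) : ∀ m : ℕ, (Mm x (m+1) m).det = Ss x (m+1)
  | 0 => base0 x
  | 1 => base1 x
  | 2 => base2 x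
  | 3 => base3 x
  | (m+4) => by
    have I1 := key x m
    have I3 := key x (m+2)
    have e3 := L3 x (m+2)
    rw [show m+2+3 = m+5 from rfl, show m+2+2 = m+4 from rfl,
      show m+2+1 = m+3 from rfl] at e3
    have e2 := L2 x m
    have e1 := L1 x m
    have es := Srec x (m+1)
    rw [show m+1+4 = m+5 from rfl, show m+1+2 = m+3 from rfl] at es
    rw [show m+4+1 = m+5 from rfl]
    rw [show m+2+1 = m+3 from rfl] at I3
    rw [e3, e2, e1, I1, I3, es]
    ring

/-- For each positive integer `n` and all real `x`:
`det(x·I_n − A_n) = ∑_{k=0}^{n} (−1)^{⌊3k/2⌋} C(⌊(n+k)/2⌋,k) x^{n−k}`. -/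
theorem det_A_explicit (n : ℕ) (hn : 0 < n) (x : ℝ) :
    (x • (1 : Matrix (Fin n) (Fin n) ℝ) - A n).det =
      ∑ k ∈ Finset.range (n + 1),
        (-1 : ℝ) ^ (3 * k / 2) * (Nat.choose ((n + k) / 2) k : ℝ) * x ^ (n - k) := by
  obtain ⟨m, rfl⟩ : ∃ m, n = m+1 := ⟨n-1, by omega⟩
  have hmat : x • (1 : Matrix (Fin (m+1)) (Fin (m+1)) ℝ) - A (m+1) = Mm x (m+1) m := by
    ext i j
    have hij : (i = j) ↔ ((i:ℕ) = (j:ℕ)) := ⟨fun h => by rw [h], fun h => Fin.ext h⟩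
    have hc : ((i:ℕ)+(j:ℕ)+1 ≤ m+1) ↔ ((i:ℕ)+(j:ℕ) ≤ m) := by omega
    simp only [Matrix.sub_apply, Matrix.smul_apply, Matrix.one_apply, smul_eq_mul, A, Mm,
      Matrix.of_apply]
    rw [if_congr hij rfl rfl, if_congr hc rfl rfl]
    split_ifs <;> ring
  rw [hmat, key x m, Ss]
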